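/- If n is an odd perfect number, then its prime factorization has the form n = p₁^{α₁} ⋯ p_k^{α_k} · q^{β}, where p₁, …, p_k, q are distinct odd primes, k ≥ 2, each α_i is even, β is odd, and both q ≡ 1 (mod 4) and β ≡ 1 (mod 4). -/

import Mathlib

open Finset

lemma auxMod (p m t : ℕ) (hm : 2 ≤ m) (hp : p % m = 1) :
    (∑ i ∈ Finset.range t, p ^ i) % m = t % m := by
  conv_lhs => rw [Finset.sum_nat_mod]
  have h : ∀ i ∈ Finset.range t, p ^ i % m = 1 := fun i _ => by
    rw [Nat.pow_mod, hp, one_pow, Nat.mod_eq_of_lt hm]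
  rw [Finset.sum_congr rfl h, Finset.sum_const, smul_eq_mul, mul_one, Finset.card_range]

lemma auxDvd4 (p m : ℕ) (hp : p % 4 = 3) : 4 ∣ ∑ i ∈ Finset.range (2 * m), p ^ i := by
  induction m with
  | zero => simp
  | succ m ih =>
    have h : 2 * (m + 1) = 2 * m + 1 + 1 := by ring
    rw [h, Finset.sum_range_succ, Finset.sum_range_succ, add_assoc]
    refine ih.add ?_
    have h2 : p ^ (2 * m) + p ^ (2 * m + 1) = p ^ (2 * m) * (1 + p) := by ring
    rw [h2]
    exact Dvd.dvd.mul_left (by omega) _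

lemma auxGeom (p t : ℕ) (hp : 1 ≤ p) :
    (∑ i ∈ Finset.range t, p ^ i) * (p - 1) = p ^ t - 1 := by
  have h1 : 1 ≤ p ^ t := Nat.one_le_pow _ _ hp
  have h2 := geom_sum_mul (p : ℤ) t
  zify [hp, h1]
  push_cast at h2 ⊢
  linarith


/-- If `n` is an odd perfect number, then its prime factorization has the form
`n = p₁^{α₁} ⋯ p_k^{α_k} · q^β` with `p₁, …, p_k, q` distinct odd primes,
`k ≥ 2`, each `αᵢ` even, `β` odd, `q ≡ 1 [MOD 4]` and `β ≡ 1 [MOD 4]`. -/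
theorem stmt13 (n : ℕ) (hn_odd : Odd n) (hn_perf : n.Perfect) :
    ∃ (k : ℕ) (p : Fin k → ℕ) (α : Fin k → ℕ) (q β : ℕ),
      2 ≤ k ∧
      (∀ i, (p i).Prime) ∧ (∀ i, Odd (p i)) ∧ Function.Injective p ∧
      q.Prime ∧ Odd q ∧ (∀ i, p i ≠ q) ∧
      (∀ i, Even (α i)) ∧ (∀ i, 0 < α i) ∧ Odd β ∧
      q % 4 = 1 ∧ β % 4 = 1 ∧
      n = (∏ i, p i ^ α i) * q ^ β := by
  have hn0 : 0 < n := hn_perf.2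
  have hn1 : n ≠ 1 := by
    rintro rfl
    have := hn_perf.1
    simp at this
  have hn2 : 2 ≤ n := by omega
  have hnd2 : ¬ (2 ∣ n) := by
    rw [Nat.two_dvd_ne_zero]
    exact Nat.odd_iff.mp hn_odd
  set S := n.primeFactors with hS
  set f := n.factorization with hf
  set g : ℕ → ℕ := fun p => ∑ i ∈ Finset.range (f p + 1), p ^ i with hg
  -- basic facts about S
  have hSmem : ∀ p ∈ S, p.Prime ∧ p % 2 = 1 ∧ 0 < f p := by
    intro p hp
    have hpp := Nat.prime_of_mem_primeFactors hp
    have hpd := Nat.dvd_of_mem_primeFactors hp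
    have hp2 : p ≠ 2 := by rintro rfl; exact hnd2 hpd
    refine ⟨hpp, Nat.odd_iff.mp (hpp.odd_of_ne_two hp2), ?_⟩
    have : f p ≠ 0 :=
      Finsupp.mem_support_iff.mp (by rw [Nat.support_factorization]; exact hp)
    omega
  have hSne : S.Nonempty := (Nat.nonempty_primeFactors).mpr (by omega)
  -- sigma identity
  have hsigma : ∏ p ∈ S, g p = 2 * n := by
    rw [← Nat.sum_divisors (by omega)]
    exact (Nat.perfect_iff_sum_divisors_eq_two_mul hn0).mp hn_perf
  have hgpos : ∀ p ∈ S, 0 < g p := by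
    intro p hp
    apply Finset.sum_pos
    · intro i _
      exact Nat.pow_pos (hSmem p hp).1.pos
    · exact ⟨0, Finset.mem_range.mpr (by omega)⟩
  -- 2-adic valuation of the sigma identity
  have hval : ∑ p ∈ S, (g p).factorization 2 = 1 := by
    have h1 : (∏ p ∈ S, g p).factorization = ∑ p ∈ S, (g p).factorization :=
      Nat.factorization_prod (fun p hp => (hgpos p hp).ne')
    have h2 : (2 * n).factorization 2 = 1 := by
      rw [Nat.factorization_mul (by norm_num) (by omega)]
      have h3 : n.factorization 2 = 0 := Nat.factorization_eq_zero_of_not_dvd hnd2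
      simp [Nat.Prime.factorization Nat.prime_two, h3]
    calc ∑ p ∈ S, (g p).factorization 2 = (∑ p ∈ S, (g p).factorization) 2 := by
          rw [Finset.sum_apply']
      _ = (∏ p ∈ S, g p).factorization 2 := by rw [h1]
      _ = 1 := by rw [hsigma]; exact h2
  set v : ℕ → ℕ := fun p => (g p).factorization 2 with hv
  obtain ⟨q, hqS, hqne⟩ := Finset.exists_ne_zero_of_sum_ne_zero
    (show ∑ p ∈ S, v p ≠ 0 by rw [hval]; norm_num)
  have hsplit := Finset.add_sum_erase S v hqS
  rw [hval] at hsplit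
  have hvq : v q = 1 := by omega
  have hrest0 : ∑ p ∈ S.erase q, v p = 0 := by omega
  have hrest : ∀ p ∈ S.erase q, v p = 0 :=
    fun p hp => Finset.sum_eq_zero_iff.mp hrest0 p hp
  -- exponents of other primes are even
  have heven : ∀ p ∈ S.erase q, f p % 2 = 0 := by
    intro p hp
    have hpS : p ∈ S := Finset.mem_of_mem_erase hp
    have hnd : ¬ 2 ∣ g p := by
      have h0 := hrest p hp
      simp only [hv] at h0
      rcases (Nat.factorization_eq_zero_iff _ _).mp h0 with h | h | h
      · exact absurd Nat.prime_two h
      · exact h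
      · exact absurd h (hgpos p hpS).ne'
    have hm := auxMod p 2 (f p + 1) (le_refl 2) (hSmem p hpS).2.1
    simp only [hg] at hnd
    omega
  -- q : exponent odd, q % 4 = 1, f q % 4 = 1
  have hq2 : 2 ∣ g q := Nat.dvd_of_factorization_pos hqne
  have hq4 : ¬ (4 ∣ g q) := by
    intro h4
    have : 2 ≤ (g q).factorization 2 :=
      (Nat.Prime.pow_dvd_iff_le_factorization Nat.prime_two (hgpos q hqS).ne').mp
        (by norm_num at h4 ⊢; exact h4)
    have h2' : 2 ≤ v q := this
    omega
  have hfqodd : f q % 2 = 1 := by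
    have hm := auxMod q 2 (f q + 1) (le_refl 2) (hSmem q hqS).2.1
    simp only [hg] at hq2
    omega
  have hqmod4 : q % 4 = 1 := by
    have hq21 : q % 2 = 1 := (hSmem q hqS).2.1
    have hcase : q % 4 = 1 ∨ q % 4 = 3 := by omega
    rcases hcase with h1 | h3
    · exact h1
    · exfalso
      apply hq4
      have h2m : f q + 1 = 2 * ((f q + 1) / 2) := by omega
      have := auxDvd4 q ((f q + 1) / 2) h3
      rw [← h2m] at this
      exact this
  have hfq4 : f q % 4 = 1 := by
    have hm := auxMod q 4 (f q + 1) (by norm_num) hqmod4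
    simp only [hg] at hq2 hq4
    omega
  -- product formula for n
  have hn_eq : ∏ p ∈ S, p ^ f p = n := by
    conv_rhs => rw [← Nat.factorization_prod_pow_eq_self (show n ≠ 0 by omega)]
    rfl
  -- key inequality: 2 * ∏ (p-1) < ∏ p
  have hineq : 2 * ∏ p ∈ S, (p - 1) < ∏ p ∈ S, p := by
    have hA : ∀ p ∈ S, g p * (p - 1) = p ^ (f p + 1) - 1 := fun p hp =>
      auxGeom p (f p + 1) (hSmem p hp).1.pos
    have hB : ∏ p ∈ S, (p ^ (f p + 1) - 1) < ∏ p ∈ S, p ^ (f p + 1) := by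
      refine Finset.prod_lt_prod_of_nonempty (fun p hp => ?_) (fun p hp => ?_) hSne
      · have h2 : 2 ≤ p := (hSmem p hp).1.two_le
        have h3 : p ≤ p ^ (f p + 1) := Nat.le_self_pow (by omega) p
        omega
      · have h2 : 2 ≤ p := (hSmem p hp).1.two_le
        have h3 : p ≤ p ^ (f p + 1) := Nat.le_self_pow (by omega) p
        omega
    have hC : ∏ p ∈ S, p ^ (f p + 1) = n * ∏ p ∈ S, p := by
      rw [← hn_eq, ← Finset.prod_mul_distrib]
      exact Finset.prod_congr rfl fun p _ => pow_succ p (f p)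
    have hD : (2 * n) * ∏ p ∈ S, (p - 1) = ∏ p ∈ S, (p ^ (f p + 1) - 1) := by
      rw [← hsigma, ← Finset.prod_mul_distrib]
      exact Finset.prod_congr rfl hA
    have hE : n * (2 * ∏ p ∈ S, (p - 1)) < n * ∏ p ∈ S, p := by
      have := hD ▸ (hC ▸ hB)
      calc n * (2 * ∏ p ∈ S, (p - 1)) = (2 * n) * ∏ p ∈ S, (p - 1) := by ring
        _ < n * ∏ p ∈ S, p := by rw [hD]; rw [hC] at hB; exact hB
    exact Nat.lt_of_mul_lt_mul_left hE
  -- at least three distinct prime factors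
  have hcard : 3 ≤ S.card := by
    by_contra hc
    push_neg at hc
    have hpos : 0 < S.card := Finset.card_pos.mpr hSne
    have h12 : S.card = 1 ∨ S.card = 2 := by omega
    rcases h12 with h1 | h2
    · obtain ⟨a, ha⟩ := Finset.card_eq_one.mp h1
      have haS : a ∈ S := by rw [ha]; exact Finset.mem_singleton_self a
      rw [ha, Finset.prod_singleton, Finset.prod_singleton] at hineq
      have h2a := (hSmem a haS).1.two_le
      omega
    · obtain ⟨a, b, hab, hS2⟩ := Finset.card_eq_two.mp h2
      rw [hS2, Finset.prod_pair hab, Finset.prod_pair hab] at hineq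
      have haS : a ∈ S := by rw [hS2]; simp
      have hbS : b ∈ S := by rw [hS2]; simp
      obtain ⟨hap, ha2, -⟩ := hSmem a haS
      obtain ⟨hbp, hb2, -⟩ := hSmem b hbS
      have ha3 : 3 ≤ a := by have := hap.two_le; omega
      have hb3 : 3 ≤ b := by have := hbp.two_le; omega
      obtain ⟨u, rfl⟩ : ∃ u, a = u + 1 := ⟨a - 1, by omega⟩
      obtain ⟨w, rfl⟩ : ∃ w, b = w + 1 := ⟨b - 1, by omega⟩
      simp only [Nat.add_sub_cancel] at hineq
      have hu2 : 2 ≤ u := by omega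
      have hw2 : 2 ≤ w := by omega
      have hkey : (u + 1) * (w + 1) < 2 * (u * w) := by
        rcases Nat.lt_or_ge u w with h | h
        · have hw4 : u + 2 ≤ w := by omega
          have h1 : 2 * w ≤ u * w := Nat.mul_le_mul_right w hu2
          nlinarith
        · have hu4 : w + 2 ≤ u := by omega
          have h1 : 2 * u ≤ w * u := Nat.mul_le_mul_right u hw2
          nlinarith
      omega
  -- assemble the answer
  have hcard2 : 2 ≤ (S.erase q).card := by
    rw [Finset.card_erase_of_mem hqS]; omega
  set T := S.erase q with hT
  set k := T.card with hk
  set e := T.equivFin with he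
  have hmemT : ∀ i : Fin k, ((e.symm i : ℕ)) ∈ T := fun i => (e.symm i).2
  have hmemS : ∀ i : Fin k, ((e.symm i : ℕ)) ∈ S := fun i =>
    Finset.mem_of_mem_erase (hmemT i)
  refine ⟨k, fun i => (e.symm i : ℕ), fun i => f ((e.symm i : ℕ)), q, f q,
    hcard2, fun i => (hSmem _ (hmemS i)).1,
    fun i => Nat.odd_iff.mpr (hSmem _ (hmemS i)).2.1,
    fun i j h => e.symm.injective (Subtype.ext h),
    (hSmem q hqS).1, Nat.odd_iff.mpr (hSmem q hqS).2.1,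
    fun i => Finset.ne_of_mem_erase (hmemT i),
    fun i => Nat.even_iff.mpr (heven _ (hmemT i)),
    fun i => (hSmem _ (hmemS i)).2.2,
    Nat.odd_iff.mpr hfqodd, hqmod4, hfq4, ?_⟩
  have hprod : ∏ i, ((e.symm i : ℕ)) ^ f ((e.symm i : ℕ)) = ∏ x ∈ T, x ^ f x := by
    rw [← Finset.prod_coe_sort T (fun x => x ^ f x)]
    exact Equiv.prod_comp e.symm (fun x : T => (x : ℕ) ^ f (x : ℕ))
  rw [hprod]
  exact ((Finset.prod_erase_mul S (fun x => x ^ f x) hqS).trans hn_eq).symm
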